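/- Let 0 < ε < 1, a = 1 − ε⁴/(1+ε²)², b = 1/ε, f(t) = (1 + a t²)/(1 + t²), g(t) = ε/(1 + (t−b)²), and h = f + g. Then h'(t) ≠ 0 for all t ≤ b/2. In particular, every critical point of h is greater than 1/(2ε), even though the unique critical point of f is at t = 0. -/

import Mathlib

theorem stmt_5 (ε : ℝ) (hε0 : 0 < ε) (hε1 : ε < 1)
    (a b : ℝ) (ha : a = 1 - ε ^ 4 / (1 + ε ^ 2) ^ 2) (hb : b = 1 / ε)
    (f g h : ℝ → ℝ)
    (hf : ∀ t, f t = (1 + a * t ^ 2) / (1 + t ^ 2))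
    (hg : ∀ t, g t = ε / (1 + (t - b) ^ 2))
    (hh : h = f + g) :
    (∀ t, t ≤ b / 2 → deriv h t ≠ 0) ∧
    (∀ t, deriv h t = 0 → 1 / (2 * ε) < t) ∧
    (∀ t, deriv f t = 0 ↔ t = 0) := by
  have hεne : ε ≠ 0 := ne_of_gt hε0
  have hb0 : 0 < b := by rw [hb]; positivity
  have ha1 : 1 - a = ε ^ 4 / (1 + ε ^ 2) ^ 2 := by rw [ha]; ring
  have hapos : 0 < 1 - a := by rw [ha1]; positivity
  have hεb : ε * b = 1 := by rw [hb]; field_simp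
  have hfd : ∀ t : ℝ, HasDerivAt f (2 * (a - 1) * t / (1 + t ^ 2) ^ 2) t := by
    intro t
    have hne : (1 + t ^ 2 : ℝ) ≠ 0 := by positivity
    have hfe : f = fun t : ℝ => (1 + a * t ^ 2) / (1 + t ^ 2) := funext hf
    rw [hfe]
    have h1 : HasDerivAt (fun t : ℝ => 1 + a * t ^ 2) (a * (2 * t)) t := by
      simpa using ((hasDerivAt_pow 2 t).const_mul a).const_add 1
    have h2 : HasDerivAt (fun t : ℝ => 1 + t ^ 2) (2 * t) t := by
      simpa using (hasDerivAt_pow 2 t).const_add 1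
    have := h1.div h2 hne
    refine this.congr_deriv ?_
    ring
  have hgd : ∀ t : ℝ, HasDerivAt g (2 * ε * (b - t) / (1 + (t - b) ^ 2) ^ 2) t := by
    intro t
    have hne : (1 + (t - b) ^ 2 : ℝ) ≠ 0 := by positivity
    have hge : g = fun t : ℝ => ε / (1 + (t - b) ^ 2) := funext hg
    rw [hge]
    have h2 : HasDerivAt (fun t : ℝ => 1 + (t - b) ^ 2) (2 * (t - b)) t := by
      have := (((hasDerivAt_id t).sub_const b).pow 2).const_add 1
      simpa using this
    have := (hasDerivAt_const t ε).div h2 hne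
    refine this.congr_deriv ?_
    ring
  have hhd : ∀ t : ℝ, deriv h t =
      2 * (a - 1) * t / (1 + t ^ 2) ^ 2 + 2 * ε * (b - t) / (1 + (t - b) ^ 2) ^ 2 := by
    intro t
    subst hh
    exact ((hfd t).add (hgd t)).deriv
  have key : ∀ t : ℝ, t ≤ b / 2 → 0 < deriv h t := by
    intro t ht
    rw [hhd t]
    rcases le_or_gt t 0 with h0 | h0
    · have hbt : 0 < b - t := by linarith
      have t1 : 0 ≤ 2 * (a - 1) * t / (1 + t ^ 2) ^ 2 := by
        apply div_nonneg _ (by positivity)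
        nlinarith
      have t2 : 0 < 2 * ε * (b - t) / (1 + (t - b) ^ 2) ^ 2 := by positivity
      linarith
    · have hL : 2 * (1 - a) * t / (1 + t ^ 2) ^ 2 < 1 - a := by
        rw [div_lt_iff₀ (by positivity)]
        have h2t : 2 * t < (1 + t ^ 2) ^ 2 := by
          nlinarith [sq_nonneg (t - 1), sq_nonneg (t ^ 2)]
        nlinarith [mul_lt_mul_of_pos_left h2t hapos]
      have hkey : (1 - a) * (1 + b ^ 2) ^ 2 = 1 := by
        rw [ha1, hb]; field_simp; ring
      have hR : 1 - a ≤ 2 * ε * (b - t) / (1 + (t - b) ^ 2) ^ 2 := by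
        rw [le_div_iff₀ (by positivity)]
        have h1 : (t - b) ^ 2 ≤ b ^ 2 := by nlinarith
        have h2 : (1 + (t - b) ^ 2) ^ 2 ≤ (1 + b ^ 2) ^ 2 :=
          pow_le_pow_left₀ (by positivity) (by linarith) 2
        have h3 : (1 - a) * (1 + (t - b) ^ 2) ^ 2 ≤ 1 :=
          le_of_le_of_eq (mul_le_mul_of_nonneg_left h2 hapos.le) hkey
        have h4 : 1 ≤ 2 * ε * (b - t) := by nlinarith
        linarith
      have hneg : 2 * (a - 1) * t / (1 + t ^ 2) ^ 2 =
          -(2 * (1 - a) * t / (1 + t ^ 2) ^ 2) := by ring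
      rw [hneg]
      linarith
  refine ⟨fun t ht => (key t ht).ne', fun t hdz => ?_, fun t => ?_⟩
  · by_contra hle
    push_neg at hle
    have heq : 1 / (2 * ε) = b / 2 := by rw [hb]; ring
    have hteq : t ≤ b / 2 := heq ▸ hle
    exact (key t hteq).ne' hdz
  · rw [(hfd t).deriv]
    constructor
    · intro h0
      have hne : ((1 + t ^ 2) ^ 2 : ℝ) ≠ 0 := by positivity
      rw [div_eq_zero_iff] at h0
      rcases h0 with h0 | h0
      · rcases mul_eq_zero.mp h0 with h1 | h1
        · exfalso; rcases mul_eq_zero.mp h1 with h2 | h2 <;> [norm_num at h2; nlinarith]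
        · exact h1
      · exact absurd h0 hne
    · intro h0; rw [h0]; simp
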